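/- arXiv:2207.08717 — 4 statements merged into one kernel-verified Lean document; each statement's English description precedes it below -/
import Mathlib

section
/- Let X be a Banach space, Z ⊆ X a subspace, and Y a normed space. Suppose for some 0 < ε < 1: ‖z + y'‖ ≥ (2 − ε) for all z ∈ S_Z and all y' in the image under T of S_Y, where T : Y → X satisfies ‖T‖ ≤ 1. Then for all nonzero z ∈ Z and nonzero y ∈ Y, ‖z + T(y)‖ ≥ (1−ε)²(‖z‖ + ‖y‖). -/
/-- Homogeneity argument: from `‖z + T y‖ ≥ 2 - ε` for unit vectors `z ∈ Z`, `y ∈ Y`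
(with `‖T‖ ≤ 1`) one deduces `‖z + T y‖ ≥ (1-ε)² (‖z‖ + ‖y‖)` for all nonzero
`z ∈ Z`, `y ∈ Y`. -/
theorem stmt2 {X Y : Type*} [NormedAddCommGroup X] [NormedSpace ℝ X] [CompleteSpace X]
    [NormedAddCommGroup Y] [NormedSpace ℝ Y]
    (Z : Submodule ℝ X) (T : Y →L[ℝ] X) (hT : ‖T‖ ≤ 1)
    (ε : ℝ) (hε0 : 0 < ε) (hε1 : ε < 1)
    (h : ∀ z ∈ Z, ‖z‖ = 1 → ∀ y : Y, ‖y‖ = 1 → 2 - ε ≤ ‖z + T y‖) :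
    ∀ z ∈ Z, z ≠ 0 → ∀ y : Y, y ≠ 0 →
      (1 - ε) ^ 2 * (‖z‖ + ‖y‖) ≤ ‖z + T y‖ := by
  intro z hz hz0 y hy0
  have ha : (0:ℝ) < ‖z‖ := norm_pos_iff.mpr hz0
  have hb : (0:ℝ) < ‖y‖ := norm_pos_iff.mpr hy0
  set a := ‖z‖ with ha'
  set b := ‖y‖ with hb'
  set z₁ : X := a⁻¹ • z with hz₁
  set y₁ : Y := b⁻¹ • y with hy₁
  have hz1 : ‖z₁‖ = 1 := by
    rw [hz₁, norm_smul, Real.norm_eq_abs, abs_inv, abs_of_pos ha]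
    field_simp
    exact ha'.symm
  have hy1 : ‖y₁‖ = 1 := by
    rw [hy₁, norm_smul, Real.norm_eq_abs, abs_inv, abs_of_pos hb]
    field_simp
    exact hb'.symm
  have key : 2 - ε ≤ ‖z₁ + T y₁‖ := h z₁ (Z.smul_mem _ hz) hz1 y₁ hy1
  set w : X := T y₁ with hw
  have hw1 : ‖w‖ ≤ 1 := by
    calc ‖T y₁‖ ≤ ‖T‖ * ‖y₁‖ := T.le_opNorm _
    _ ≤ 1 := by rw [hy1]; linarith
  have hza : z = a • z₁ := by
    rw [hz₁, smul_smul, mul_inv_cancel₀ ha.ne', one_smul]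
  have hTy : T y = b • w := by
    rw [hw, hy₁, map_smul, smul_smul, mul_inv_cancel₀ hb.ne', one_smul]
  have hs : 0 ≤ ‖z₁ + w‖ := norm_nonneg _
  rcases le_total b a with hab | hab
  · -- a ≥ b : z + T y = a • (z₁ + w) + (b - a) • w
    have e1 : z + T y = a • (z₁ + w) + (b - a) • w := by
      rw [hza, hTy]; module
    have tri : ‖a • (z₁ + w)‖ ≤ ‖a • (z₁ + w) + (b - a) • w‖ + ‖(b - a) • w‖ := by
      have := norm_add_le (a • (z₁ + w) + (b - a) • w) (-((b - a) • w))
      simpa using this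
    have n1 : ‖a • (z₁ + w)‖ = a * ‖z₁ + w‖ := by
      rw [norm_smul, Real.norm_eq_abs, abs_of_pos ha]
    have n2 : ‖(b - a) • w‖ ≤ a - b := by
      rw [norm_smul, Real.norm_eq_abs, abs_of_nonpos (by linarith)]
      nlinarith [norm_nonneg w]
    rw [e1]
    nlinarith [mul_le_mul_of_nonneg_left key ha.le,
      mul_nonneg (mul_nonneg hε0.le (by linarith : (0:ℝ) ≤ 1 - ε)) ha.le,
      mul_nonneg (mul_nonneg hε0.le (by linarith : (0:ℝ) ≤ 1 - ε)) hb.le,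
      mul_pos hε0 hb]
  · -- b ≥ a : z + T y = b • (z₁ + w) + (a - b) • z₁
    have e1 : z + T y = b • (z₁ + w) + (a - b) • z₁ := by
      rw [hza, hTy]; module
    have tri : ‖b • (z₁ + w)‖ ≤ ‖b • (z₁ + w) + (a - b) • z₁‖ + ‖(a - b) • z₁‖ := by
      have := norm_add_le (b • (z₁ + w) + (a - b) • z₁) (-((a - b) • z₁))
      simpa using this
    have n1 : ‖b • (z₁ + w)‖ = b * ‖z₁ + w‖ := by
      rw [norm_smul, Real.norm_eq_abs, abs_of_pos hb]
    have n2 : ‖(a - b) • z₁‖ ≤ b - a := by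
      rw [norm_smul, Real.norm_eq_abs, abs_of_nonpos (by linarith), hz1]
      linarith
    rw [e1]
    nlinarith [mul_le_mul_of_nonneg_left key hb.le,
      mul_nonneg (mul_nonneg hε0.le (by linarith : (0:ℝ) ≤ 1 - ε)) ha.le,
      mul_nonneg (mul_nonneg hε0.le (by linarith : (0:ℝ) ≤ 1 - ε)) hb.le,
      mul_pos hε0 ha]
end

section
/- Let X be a Banach space such that for every ε > 0, every finite-dimensional subspace Z ⊆ X, and every n ∈ ℕ there is T : ℓ_∞ⁿ → X with ‖T‖ ≤ 1 and ‖z + T(y)‖ ≥ (1−ε)(‖z‖ + ‖y‖) for all z ∈ Z, y ∈ ℓ_∞ⁿ. Then for every Banach space Y and every subspace H ⊆ L(Y,X) containing the finite-rank operators, the norm of H is octahedral; in particular L(Y,X) is octahedral for every nonzero Y. -/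
open scoped ENNReal

/-- A norm is octahedral if for every finite-dimensional subspace `E` and every `ε > 0`
there is a unit vector `u` with `‖x + λ • u‖ ≥ (1-ε)(‖x‖ + |λ|)` for `x ∈ E`, `λ ∈ ℝ`. -/
def Octahedral (X : Type*) [NormedAddCommGroup X] [NormedSpace ℝ X] : Prop :=
  ∀ E : Submodule ℝ X, FiniteDimensional ℝ E → ∀ ε : ℝ, 0 < ε →
    ∃ u : X, ‖u‖ = 1 ∧ ∀ x ∈ E, ∀ l : ℝ, (1 - ε) * (‖x‖ + |l|) ≤ ‖x + l • u‖

section Aux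

variable {X Y : Type*} [NormedAddCommGroup X] [NormedSpace ℝ X]
  [NormedAddCommGroup Y] [NormedSpace ℝ Y]

/-- Evaluation at a point as a linear map on operators. -/
def evalLM (y : Y) : (Y →L[ℝ] X) →ₗ[ℝ] X where
  toFun S := S y
  map_add' _ _ := rfl
  map_smul' _ _ := rfl

/-- For an operator of norm one there is a unit vector almost attaining the norm. -/
lemma exists_unit_almost_norming (S : Y →L[ℝ] X) (hS : ‖S‖ = 1) {δ : ℝ} (hδ : 0 < δ)
    (hδ1 : δ < 1) : ∃ y : Y, ‖y‖ = 1 ∧ 1 - δ ≤ ‖S y‖ := by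
  have h1 : (1 - δ : ℝ) < ‖S‖ := by rw [hS]; linarith
  obtain ⟨x, hx1, hx2⟩ := S.exists_lt_apply_of_lt_opNorm h1
  have hx0 : x ≠ 0 := by
    rintro rfl
    simp only [map_zero, norm_zero] at hx2; linarith
  have hxn : (0:ℝ) < ‖x‖ := norm_pos_iff.mpr hx0
  refine ⟨‖x‖⁻¹ • x, ?_, ?_⟩
  · rw [norm_smul, norm_inv, norm_norm, inv_mul_cancel₀ hxn.ne']
  · have : ‖S (‖x‖⁻¹ • x)‖ = ‖x‖⁻¹ * ‖S x‖ := by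
      rw [map_smul, norm_smul, norm_inv, norm_norm]
    rw [this]
    have h2 : (1:ℝ) ≤ ‖x‖⁻¹ := by
      rw [le_inv_comm₀ one_pos hxn]; simpa using hx1.le
    nlinarith [norm_nonneg (S x)]

set_option maxHeartbeats 4000000 in
/-- Core construction: a norm-one finite-rank operator `Ψ` witnessing octahedrality for a
given finite-dimensional space of operators. -/
lemma core [CompleteSpace X] [Nontrivial Y]
    (h : ∀ ε : ℝ, 0 < ε → ∀ Z : Submodule ℝ X, FiniteDimensional ℝ Z → ∀ n : ℕ,
      ∃ T : PiLp ⊤ (fun _ : Fin n => ℝ) →L[ℝ] X, ‖T‖ ≤ 1 ∧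
        ∀ z ∈ Z, ∀ y : PiLp ⊤ (fun _ : Fin n => ℝ),
          (1 - ε) * (‖z‖ + ‖y‖) ≤ ‖z + T y‖)
    (E : Submodule ℝ (Y →L[ℝ] X)) (hE : FiniteDimensional ℝ E) {ε : ℝ} (hε : 0 < ε) :
    ∃ Ψ : Y →L[ℝ] X, ‖Ψ‖ = 1 ∧
      FiniteDimensional ℝ (LinearMap.range (Ψ : Y →ₗ[ℝ] X)) ∧
      ∀ S ∈ E, ∀ l : ℝ, (1 - ε) * (‖S‖ + |l|) ≤ ‖S + l • Ψ‖ := by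
  classical
  set δ : ℝ := min (ε/3) (1/3) with hδdef
  have hδpos : 0 < δ := lt_min (by linarith) (by norm_num)
  have hδε : δ ≤ ε/3 := min_le_left _ _
  have hδ3 : δ ≤ 1/3 := min_le_right _ _
  have hδ1 : δ < 1 := by linarith
  -- the compact unit sphere of E, viewed inside the operator space
  set K : Set (Y →L[ℝ] X) := (↑) '' (Metric.sphere (0:E) 1) with hKdef
  have hKnorm : ∀ S ∈ K, ‖S‖ = 1 := by
    rintro S ⟨e, he, rfl⟩
    simpa [Metric.mem_sphere, dist_eq_norm] using he
  have hK : IsCompact K := (isCompact_sphere 0 1).image continuous_subtype_val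
  obtain ⟨t, htK, htfin, htcover⟩ := hK.finite_cover_balls hδpos
  -- enumerate the net
  set L : List (Y →L[ℝ] X) := htfin.toFinset.toList with hLdef
  have hmemL : ∀ c ∈ t, c ∈ L := by
    intro c hc
    simp [hLdef, Set.Finite.mem_toFinset, hc]
  set n : ℕ := L.length + 1 with hndef
  -- an arbitrary unit vector of Y
  obtain ⟨y', hy'⟩ := exists_ne (0 : Y)
  have hy'n : (0:ℝ) < ‖y'‖ := norm_pos_iff.mpr hy'
  set y₀ : Y := ‖y'‖⁻¹ • y' with hy₀def
  have hy₀ : ‖y₀‖ = 1 := by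
    rw [hy₀def, norm_smul, norm_inv, norm_norm, inv_mul_cancel₀ hy'n.ne']
  -- almost-norming unit vectors
  set pick : (Y →L[ℝ] X) → Y := fun S =>
    if hS : ‖S‖ = 1 then Classical.choose (exists_unit_almost_norming S hS hδpos hδ1)
    else y₀ with hpickdef
  have hpick1 : ∀ S, ‖pick S‖ = 1 := by
    intro S
    by_cases hS : ‖S‖ = 1
    · simp only [hpickdef, dif_pos hS]
      exact (Classical.choose_spec (exists_unit_almost_norming S hS hδpos hδ1)).1
    · simp only [hpickdef, dif_neg hS]; exact hy₀
  have hpick2 : ∀ S : Y →L[ℝ] X, ‖S‖ = 1 → 1 - δ ≤ ‖S (pick S)‖ := by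
    intro S hS
    simp only [hpickdef, dif_pos hS]
    exact (Classical.choose_spec (exists_unit_almost_norming S hS hδpos hδ1)).2
  -- the chosen vectors, one for each net element plus one dummy
  set yv : Fin n → Y := fun i =>
    if hi : (i : ℕ) < L.length then pick (L.get ⟨i, hi⟩) else y₀ with hyvdef
  have hyv1 : ∀ i, ‖yv i‖ = 1 := by
    intro i
    by_cases hi : (i : ℕ) < L.length
    · simp only [hyvdef, dif_pos hi]; exact hpick1 _
    · simp only [hyvdef, dif_neg hi]; exact hy₀
  have hyv0 : ∀ i, yv i ≠ 0 := fun i => by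
    intro h0; have := hyv1 i; rw [h0, norm_zero] at this; linarith
  -- dual functionals
  set fv : Fin n → (Y →L[ℝ] ℝ) := fun i =>
    Classical.choose (exists_dual_vector ℝ (yv i) (norm_ne_zero_iff.mpr (hyv0 i))) with hfvdef
  have hfv1 : ∀ i, ‖fv i‖ = 1 := fun i =>
    (Classical.choose_spec (exists_dual_vector ℝ (yv i) (norm_ne_zero_iff.mpr (hyv0 i)))).1
  have hfv2 : ∀ i, fv i (yv i) = 1 := by
    intro i
    have h2 := (Classical.choose_spec (exists_dual_vector ℝ (yv i) (norm_ne_zero_iff.mpr (hyv0 i)))).2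
    simp only [hfvdef]
    refine h2.trans ?_
    rw [hyv1 i]
    simp
  -- the map V : Y → ℓ∞ⁿ
  set V : Y →L[ℝ] PiLp ⊤ (fun _ : Fin n => ℝ) :=
    ((PiLp.continuousLinearEquiv ⊤ ℝ (fun _ : Fin n => ℝ)).symm.toContinuousLinearMap).comp
      (ContinuousLinearMap.pi fv) with hVdef
  have hVnorm : ∀ y : Y, ‖V y‖ = ⨆ i, ‖fv i y‖ := by
    intro y; rw [PiLp.norm_eq_ciSup]; rfl
  have hVle : ∀ y : Y, ‖V y‖ ≤ ‖y‖ := by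
    intro y
    rw [hVnorm]
    refine ciSup_le fun i => ?_
    calc ‖fv i y‖ ≤ ‖fv i‖ * ‖y‖ := (fv i).le_opNorm y
    _ = ‖y‖ := by rw [hfv1]; ring
  have hVyv : ∀ i, ‖V (yv i)‖ = 1 := by
    intro i
    refine le_antisymm (by simpa [hyv1 i] using hVle (yv i)) ?_
    rw [hVnorm]
    have : ‖fv i (yv i)‖ ≤ ⨆ j, ‖fv j (yv i)‖ :=
      le_ciSup (f := fun j => ‖fv j (yv i)‖) (Set.Finite.bddAbove (Set.finite_range _)) i
    simpa [hfv2 i] using this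
  -- the finite-dimensional target subspace Z
  set Z : Submodule ℝ X := ⨆ i : Fin n, E.map (evalLM (yv i)) with hZdef
  have hZfd : FiniteDimensional ℝ Z := inferInstance
  have hZmem : ∀ (S : Y →L[ℝ] X), S ∈ E → ∀ i, S (yv i) ∈ Z := by
    intro S hS i
    refine Submodule.mem_iSup_of_mem i ?_
    exact Submodule.mem_map_of_mem hS
  -- the operator T from the hypothesis
  obtain ⟨T, hT1, hTest⟩ := h δ hδpos Z hZfd n
  set Ψ' : Y →L[ℝ] X := T.comp V with hΨ'def
  have hΨ'le : ‖Ψ'‖ ≤ 1 := by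
    refine ContinuousLinearMap.opNorm_le_bound _ zero_le_one fun y => ?_
    calc ‖Ψ' y‖ ≤ ‖T‖ * ‖V y‖ := T.le_opNorm _
    _ ≤ 1 * ‖y‖ := by
        have := hVle y
        have h0 := norm_nonneg (V y)
        nlinarith [norm_nonneg y]
  have hn0 : 0 < n := Nat.succ_pos _
  have hΨ'ge : 1 - δ ≤ ‖Ψ'‖ := by
    have i0 : Fin n := ⟨0, hn0⟩
    have h1 : (1 - δ) * (‖(0:X)‖ + ‖V (yv i0)‖) ≤ ‖(0:X) + T (V (yv i0))‖ :=
      hTest 0 (Submodule.zero_mem Z) (V (yv i0))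
    rw [norm_zero, zero_add, zero_add, hVyv i0] at h1
    have h2a : Ψ' (yv i0) = T (V (yv i0)) := rfl
    have h2 : ‖Ψ' (yv i0)‖ ≤ ‖Ψ'‖ := Ψ'.unit_le_opNorm (yv i0) (le_of_eq (hyv1 i0))
    rw [h2a] at h2
    linarith
  set a : ℝ := ‖Ψ'‖ with hadef
  have ha0 : 0 < a := by have : (0:ℝ) < 1 - δ := by linarith
                         linarith
  have ha1 : a ≤ 1 := hΨ'le
  set Ψ : Y →L[ℝ] X := a⁻¹ • Ψ' with hΨdef
  have hΨnorm : ‖Ψ‖ = 1 := by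
    have hns := norm_smul (a⁻¹) Ψ'
    rw [hΨdef, hns, norm_inv, Real.norm_eq_abs, abs_of_pos ha0,
      inv_mul_cancel₀ ha0.ne']
  have hΨapp : ∀ y, Ψ y = a⁻¹ • T (V y) := fun y => rfl
  refine ⟨Ψ, hΨnorm, ?_, ?_⟩
  · -- finite rank
    have hle : LinearMap.range (Ψ : Y →ₗ[ℝ] X) ≤
        LinearMap.range (T : PiLp ⊤ (fun _ : Fin n => ℝ) →ₗ[ℝ] X) := by
      rintro x ⟨y, rfl⟩
      have : (Ψ : Y →ₗ[ℝ] X) y = a⁻¹ • T (V y) := rfl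
      rw [this]
      exact Submodule.smul_mem _ _ ⟨V y, rfl⟩
    exact Submodule.finiteDimensional_of_le hle
  · -- the octahedrality estimate
    intro S hSE l
    by_cases hS0 : S = 0
    · subst hS0
      have hns := norm_smul l Ψ
      rw [norm_zero, zero_add, zero_add, hns, Real.norm_eq_abs, hΨnorm, mul_one]
      nlinarith [abs_nonneg l]
    · set s : ℝ := ‖S‖ with hsdef
      have hs0 : 0 < s := norm_pos_iff.mpr hS0
      set Sh : Y →L[ℝ] X := s⁻¹ • S with hShdef
      have hShE : Sh ∈ E := Submodule.smul_mem _ _ hSE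
      have hShn : ‖Sh‖ = 1 := by
        have hns := norm_smul (s⁻¹) S
        rw [hShdef, hns, norm_inv, Real.norm_eq_abs, abs_of_pos hs0, ← hsdef,
          inv_mul_cancel₀ hs0.ne']
      have hShK : Sh ∈ K := ⟨⟨Sh, hShE⟩, by
        simpa [Metric.mem_sphere, dist_eq_norm] using hShn, rfl⟩
      obtain ⟨c, hct, hdist⟩ := Set.mem_iUnion₂.mp (htcover hShK)
      have hcL : c ∈ L := hmemL c hct
      obtain ⟨j, hj⟩ := List.get_of_mem hcL
      have hjn : (j : ℕ) < n := lt_of_lt_of_le j.2 (Nat.le_succ _)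
      set i : Fin n := ⟨j, hjn⟩ with hidef
      have hyi : yv i = pick c := by
        have hi' : (i : ℕ) < L.length := j.2
        have hfin : (⟨(i : ℕ), hi'⟩ : Fin L.length) = j := Fin.ext rfl
        simp only [hyvdef, dif_pos hi', hfin, hj]
      have hcn : ‖c‖ = 1 := hKnorm c (htK hct)
      have hcpick : 1 - δ ≤ ‖c (yv i)‖ := by rw [hyi]; exact hpick2 c hcn
      have hdist' : ‖Sh - c‖ < δ := by
        rw [← dist_eq_norm]; exact Metric.mem_ball.mp hdist
      -- ‖S (yv i)‖ ≥ (1 - 2δ) s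
      have hSyi : (1 - 2*δ) * s ≤ ‖S (yv i)‖ := by
        have h1 : ‖Sh (yv i)‖ ≥ 1 - 2*δ := by
          have h2 : ‖Sh (yv i) - c (yv i)‖ ≤ ‖Sh - c‖ := by
            have := (Sh - c).unit_le_opNorm (yv i) (le_of_eq (hyv1 i))
            simpa using this
          have h3 := norm_sub_norm_le (Sh (yv i)) (c (yv i))
          have h4 : |‖Sh (yv i)‖ - ‖c (yv i)‖| ≤ ‖Sh - c‖ :=
            le_trans (abs_norm_sub_norm_le _ _) h2
          have h5 := abs_le.mp h4
          linarith [h5.1, h5.2]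
        have h6 : S (yv i) = s • Sh (yv i) := by
          rw [hShdef]
          simp only [ContinuousLinearMap.smul_apply]
          rw [smul_smul, mul_inv_cancel₀ hs0.ne', one_smul]
        rw [h6]
        have hns := norm_smul s (Sh (yv i))
        rw [hns, Real.norm_eq_abs, abs_of_pos hs0]
        nlinarith
      -- main chain
      have hyiZ : S (yv i) ∈ Z := hZmem S hSE i
      set w : PiLp ⊤ (fun _ : Fin n => ℝ) := (l * a⁻¹) • V (yv i) with hwdef
      have hwn : ‖w‖ = |l| * a⁻¹ := by
        have hns := norm_smul (l * a⁻¹) (V (yv i))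
        rw [hwdef, hns, Real.norm_eq_abs, hVyv i, mul_one, abs_mul,
          abs_of_pos (inv_pos.mpr ha0)]
      have hkey : (1 - δ) * (‖S (yv i)‖ + ‖w‖) ≤ ‖S (yv i) + T w‖ :=
        hTest (S (yv i)) hyiZ w
      have happ : (S + l • Ψ) (yv i) = S (yv i) + T w := by
        rw [hwdef]
        simp only [ContinuousLinearMap.add_apply, ContinuousLinearMap.smul_apply]
        rw [hΨapp, smul_smul, map_smul]
      have hbound : ‖S (yv i) + T w‖ ≤ ‖S + l • Ψ‖ := by
        rw [← happ]
        have := (S + l • Ψ).unit_le_opNorm (yv i) (le_of_eq (hyv1 i))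
        exact this
      have hla : |l| ≤ |l| * a⁻¹ := by
        have h7 : (1:ℝ) ≤ a⁻¹ := by
          rw [le_inv_comm₀ one_pos ha0]; simpa using ha1
        nlinarith [abs_nonneg l]
      have hfinal : (1 - ε) * (s + |l|) ≤ (1 - δ) * (‖S (yv i)‖ + ‖w‖) := by
        rw [hwn]
        have h8 : (1 - δ) * ((1 - 2*δ) * s + |l|) ≤ (1 - δ) * (‖S (yv i)‖ + |l| * a⁻¹) := by
          have h9 : (0:ℝ) < 1 - δ := by linarith
          nlinarith
        have h10 : (1 - ε) * (s + |l|) ≤ (1 - δ) * ((1 - 2*δ) * s + |l|) := by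
          nlinarith [abs_nonneg l, hs0.le,
            mul_nonneg (by linarith : (0:ℝ) ≤ ε - 3*δ) hs0.le,
            mul_nonneg (mul_self_nonneg δ) hs0.le,
            mul_nonneg (by linarith : (0:ℝ) ≤ ε - δ) (abs_nonneg l)]
        linarith
      calc (1 - ε) * (‖S‖ + |l|) = (1 - ε) * (s + |l|) := by rw [← hsdef]
      _ ≤ (1 - δ) * (‖S (yv i)‖ + ‖w‖) := hfinal
      _ ≤ ‖S (yv i) + T w‖ := hkey
      _ ≤ ‖S + l • Ψ‖ := hbound

end Aux

/-- If for every `ε > 0`, finite-dimensional `Z ⊆ X` and `n` there is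
`T : ℓ_∞ⁿ → X` with `‖T‖ ≤ 1` and `‖z + T y‖ ≥ (1-ε)(‖z‖+‖y‖)`, then for every
(nonzero) Banach space `Y` and every subspace `H ⊆ L(Y,X)` containing the finite-rank
operators, the norm of `H` is octahedral; in particular `L(Y,X)` is octahedral. -/
theorem stmt16 {X : Type*} [NormedAddCommGroup X] [NormedSpace ℝ X] [CompleteSpace X]
    (h : ∀ ε : ℝ, 0 < ε → ∀ Z : Submodule ℝ X, FiniteDimensional ℝ Z → ∀ n : ℕ,
      ∃ T : PiLp ⊤ (fun _ : Fin n => ℝ) →L[ℝ] X, ‖T‖ ≤ 1 ∧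
        ∀ z ∈ Z, ∀ y : PiLp ⊤ (fun _ : Fin n => ℝ),
          (1 - ε) * (‖z‖ + ‖y‖) ≤ ‖z + T y‖) :
    ∀ (Y : Type*) [NormedAddCommGroup Y] [NormedSpace ℝ Y] [CompleteSpace Y]
      [Nontrivial Y],
      (∀ H : Submodule ℝ (Y →L[ℝ] X),
        (∀ T : Y →L[ℝ] X, FiniteDimensional ℝ (LinearMap.range (T : Y →ₗ[ℝ] X)) →
          T ∈ H) → Octahedral H) ∧
      Octahedral (Y →L[ℝ] X) := by
  intro Y _ _ _ _
  constructor
  · intro H hH E hE ε hε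
    haveI := hE
    set E' : Submodule ℝ (Y →L[ℝ] X) := E.map H.subtype with hE'def
    haveI hE' : FiniteDimensional ℝ E' := inferInstance
    obtain ⟨Ψ, hΨ1, hΨfd, hΨest⟩ := core h E' hE' hε
    refine ⟨⟨Ψ, hH Ψ hΨfd⟩, ?_, ?_⟩
    · exact hΨ1
    · intro x hx l
      have hx' : (x : Y →L[ℝ] X) ∈ E' := ⟨x, hx, rfl⟩
      have := hΨest (x : Y →L[ℝ] X) hx' l
      simpa using this
  · intro E hE ε hε
    obtain ⟨Ψ, hΨ1, hΨfd, hΨest⟩ := core h E hE hε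
    exact ⟨Ψ, hΨ1, hΨest⟩
end

section
/- Let X and Y be Banach spaces with Y finite-dimensional. The following are equivalent: (1) for every finite-dimensional subspace Z of X and every ε > 0 there is a norm-one operator T : Y → X with ‖z + T(y)‖ ≥ (1−ε)(‖z‖ + ‖y‖) for all y ∈ Y, z ∈ Z; (2) for all finite sets {z₁,...,z_n} ⊆ S_X, {y₁,...,y_m} ⊆ S_Y, and every ε > 0 there is a norm-one operator T : Y → X with ‖z_i + T(y_j)‖ > 2 − ε for all i, j. -/
/-- Convexity/duality lemma: if two vectors of norm ≤ 1 have sum of norm ≥ 2 - ε,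
then nonnegative combinations are almost ℓ₁. -/
lemma stmt17_aux {X : Type*} [NormedAddCommGroup X] [NormedSpace ℝ X]
    (u w : X) (ε a b : ℝ) (hu : ‖u‖ ≤ 1) (hw : ‖w‖ ≤ 1)
    (hsum : 2 - ε ≤ ‖u + w‖) (ha : 0 ≤ a) (hb : 0 ≤ b) (hε : ε < 1) :
    (1 - ε) * (a + b) ≤ ‖a • u + b • w‖ := by
  have h0 : u + w ≠ 0 := by
    intro h
    rw [h, norm_zero] at hsum; linarith
  obtain ⟨f, hf1, hf2⟩ := exists_dual_vector ℝ (u + w) (norm_ne_zero_iff.2 h0)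
  have hfu : f u ≤ 1 := by
    calc f u ≤ |f u| := le_abs_self _
    _ ≤ ‖f‖ * ‖u‖ := f.le_opNorm u
    _ ≤ 1 := by rw [hf1]; simpa using hu
  have hfw : f w ≤ 1 := by
    calc f w ≤ |f w| := le_abs_self _
    _ ≤ ‖f‖ * ‖w‖ := f.le_opNorm w
    _ ≤ 1 := by rw [hf1]; simpa using hw
  have hsum' : f u + f w = ‖u + w‖ := by rw [map_add] at hf2; exact_mod_cast hf2
  have hfu' : 1 - ε ≤ f u := by linarith
  have hfw' : 1 - ε ≤ f w := by linarith
  have key : f (a • u + b • w) ≤ ‖a • u + b • w‖ := by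
    calc f (a • u + b • w) ≤ |f (a • u + b • w)| := le_abs_self _
    _ ≤ ‖f‖ * ‖a • u + b • w‖ := f.le_opNorm _
    _ = ‖a • u + b • w‖ := by rw [hf1, one_mul]
  have : f (a • u + b • w) = a * f u + b * f w := by
    simp [map_add, map_smul, smul_eq_mul]
  nlinarith [mul_le_mul_of_nonneg_left hfu' ha, mul_le_mul_of_nonneg_left hfw' hb]

/-- For `Y` finite-dimensional, the subspace formulation (1) and the finite-set
formulation (2) of "copies of `Y` can be placed `ℓ₁`-orthogonally to any
finite-dimensional part of `X`" are equivalent. -/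
theorem stmt17 {X Y : Type*} [NormedAddCommGroup X] [NormedSpace ℝ X] [CompleteSpace X]
    [NormedAddCommGroup Y] [NormedSpace ℝ Y] [FiniteDimensional ℝ Y] :
    (∀ Z : Submodule ℝ X, FiniteDimensional ℝ Z → ∀ ε : ℝ, 0 < ε →
      ∃ T : Y →L[ℝ] X, ‖T‖ = 1 ∧
        ∀ z ∈ Z, ∀ y : Y, (1 - ε) * (‖z‖ + ‖y‖) ≤ ‖z + T y‖) ↔
    (∀ (n m : ℕ) (z : Fin n → X) (y : Fin m → Y),
      (∀ i, ‖z i‖ = 1) → (∀ j, ‖y j‖ = 1) → ∀ ε : ℝ, 0 < ε →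
        ∃ T : Y →L[ℝ] X, ‖T‖ = 1 ∧ ∀ i j, 2 - ε < ‖z i + T (y j)‖) := by
  constructor
  · -- (1) ⇒ (2)
    intro h n m z y hz hy ε hε
    have hfin : FiniteDimensional ℝ (Submodule.span ℝ (Set.range z)) :=
      FiniteDimensional.span_of_finite ℝ (Set.finite_range z)
    obtain ⟨T, hT1, hT2⟩ := h (Submodule.span ℝ (Set.range z)) hfin (ε / 4) (by linarith)
    refine ⟨T, hT1, fun i j => ?_⟩
    have := hT2 (z i) (Submodule.subset_span (Set.mem_range_self i)) (y j)
    rw [hz i, hy j] at this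
    linarith
  · -- (2) ⇒ (1)
    intro h Z hZ ε hε
    rcases le_or_gt 1 ε with hge | hε1
    · obtain ⟨T, hT, -⟩ := h 0 0 (fun i => i.elim0) (fun j => j.elim0)
        (fun i => i.elim0) (fun j => j.elim0) 1 one_pos
      refine ⟨T, hT, fun z hz y => ?_⟩
      have : (1 - ε) * (‖z‖ + ‖y‖) ≤ 0 :=
        mul_nonpos_of_nonpos_of_nonneg (by linarith) (by positivity)
      exact this.trans (norm_nonneg _)
    -- main case: ε < 1
    haveI := hZ
    -- get a norm-one vector in X
    obtain ⟨T₀, hT₀, -⟩ := h 0 0 (fun i => i.elim0) (fun j => j.elim0)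
      (fun i => i.elim0) (fun j => j.elim0) 1 one_pos
    have hX : ∃ x : X, x ≠ 0 := by
      by_contra hc
      push_neg at hc
      have : T₀ = 0 := by ext v; exact hc _
      rw [this, norm_zero] at hT₀; norm_num at hT₀
    obtain ⟨x₀, hx₀⟩ := hX
    set z₀ : X := ‖x₀‖⁻¹ • x₀ with hz₀def
    have hz₀ : ‖z₀‖ = 1 := norm_smul_inv_norm hx₀
    -- compact spheres and finite nets
    have hcZ : IsCompact ((Subtype.val '' Metric.sphere (0 : Z) 1 : Set X)) :=
      (isCompact_sphere (0 : Z) 1).image continuous_subtype_val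
    obtain ⟨tZ, htZsub, htZfin, htZcov⟩ := hcZ.finite_cover_balls (show (0:ℝ) < ε/4 by linarith)
    have hcY : IsCompact (Metric.sphere (0 : Y) 1) := isCompact_sphere 0 1
    obtain ⟨tY, htYsub, htYfin, htYcov⟩ := hcY.finite_cover_balls (show (0:ℝ) < ε/4 by linarith)
    set lz : List X := z₀ :: htZfin.toFinset.toList with hlz
    set ly : List Y := htYfin.toFinset.toList with hly
    have hlzmem : ∀ x ∈ lz, ‖x‖ = 1 ∧ (x = z₀ ∨ x ∈ tZ) := by
      intro x hx
      rcases List.mem_cons.1 hx with h | h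
      · exact ⟨h ▸ hz₀, Or.inl h⟩
      · have hx' : x ∈ tZ := (Set.Finite.mem_toFinset htZfin).1 (Finset.mem_toList.1 h)
        obtain ⟨w, hw, rfl⟩ := htZsub hx'
        refine ⟨?_, Or.inr hx'⟩
        have : ‖w‖ = 1 := by simpa using mem_sphere_zero_iff_norm.1 hw
        simpa using this
    have hlymem : ∀ v ∈ ly, ‖v‖ = 1 := by
      intro v hv
      have hv' : v ∈ tY := (Set.Finite.mem_toFinset htYfin).1 (Finset.mem_toList.1 hv)
      exact mem_sphere_zero_iff_norm.1 (htYsub hv')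
    obtain ⟨T, hT, hTij⟩ := h lz.length ly.length lz.get ly.get
      (fun i => (hlzmem _ (lz.get_mem i)).1)
      (fun j => hlymem _ (ly.get_mem j)) (ε/4) (by linarith)
    -- key claim: for every unit v in Y and every u in the list, ‖u + T v‖ > 2 - ε/2
    have claim : ∀ v : Y, ‖v‖ = 1 → ∀ i : Fin lz.length, 2 - ε/2 < ‖lz.get i + T v‖ := by
      intro v hv i
      have hvs : v ∈ Metric.sphere (0 : Y) 1 := mem_sphere_zero_iff_norm.2 hv
      obtain ⟨c, hc, hvc⟩ := Set.mem_iUnion₂.1 (htYcov hvs)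
      have hcly : c ∈ ly := by
        exact Finset.mem_toList.2 ((Set.Finite.mem_toFinset htYfin).2 hc)
      obtain ⟨j, hj⟩ := List.mem_iff_get.1 hcly
      have hdist : ‖v - c‖ < ε/4 := by
        rw [← dist_eq_norm]; exact Metric.mem_ball.1 hvc
      have h1 := hTij i j
      rw [hj] at h1
      have h2 : ‖T v - T c‖ ≤ ‖v - c‖ := by
        calc ‖T v - T c‖ = ‖T (v - c)‖ := by rw [map_sub]
        _ ≤ ‖T‖ * ‖v - c‖ := T.le_opNorm _
        _ = ‖v - c‖ := by rw [hT, one_mul]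
      have h3 : ‖lz.get i + T c‖ - ‖T v - T c‖ ≤ ‖lz.get i + T v‖ := by
        have h4 := norm_sub_norm_le (lz.get i + T c) (lz.get i + T v)
        have he : (lz.get i + T c) - (lz.get i + T v) = T c - T v := by abel
        rw [he, norm_sub_rev] at h4
        linarith
      linarith
    refine ⟨T, hT, fun z hzZ y => ?_⟩
    rcases eq_or_ne y 0 with rfl | hy0
    · simp only [map_zero, add_zero, norm_zero]
      nlinarith [norm_nonneg z]
    -- y ≠ 0
    set v : Y := ‖y‖⁻¹ • y with hvdef
    have hv : ‖v‖ = 1 := norm_smul_inv_norm hy0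
    have hyv : y = ‖y‖ • v := by
      rw [hvdef, smul_smul, mul_inv_cancel₀ (norm_ne_zero_iff.2 hy0), one_smul]
    have hi0 : (0 : ℕ) < lz.length := by rw [hlz]; simp
    rcases eq_or_ne z 0 with rfl | hz0
    · -- z = 0 case
      have h1 := claim v hv ⟨0, hi0⟩
      have hget0 : lz.get ⟨0, hi0⟩ = z₀ := rfl
      rw [hget0] at h1
      have h2 : 1 - ε/2 < ‖T v‖ := by
        have := norm_add_le z₀ (T v)  -- not directly; use triangle
        have h3 : ‖z₀ + T v‖ ≤ ‖z₀‖ + ‖T v‖ := norm_add_le _ _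
        rw [hz₀] at h3; linarith
      have hTy2 : T y = ‖y‖ • T v := by
        conv_lhs => rw [hyv]
        rw [map_smul]
      have hTy : ‖T y‖ = ‖y‖ * ‖T v‖ := by rw [hTy2, norm_smul, norm_norm]
      simp only [norm_zero, zero_add]
      rw [hTy]
      nlinarith [norm_nonneg y]
    -- z ≠ 0 case
    set u : X := ‖z‖⁻¹ • z with hudef
    have hu : ‖u‖ = 1 := norm_smul_inv_norm hz0
    have huZ : u ∈ Z := Z.smul_mem _ hzZ
    have huS : u ∈ (Subtype.val '' Metric.sphere (0 : Z) 1 : Set X) := by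
      refine ⟨⟨u, huZ⟩, ?_, rfl⟩
      rw [mem_sphere_zero_iff_norm]
      show ‖u‖ = 1
      exact hu
    obtain ⟨c, hc, huc⟩ := Set.mem_iUnion₂.1 (htZcov huS)
    have hclz : c ∈ lz := by
      exact List.mem_cons.2 (Or.inr (Finset.mem_toList.2 ((Set.Finite.mem_toFinset htZfin).2 hc)))
    obtain ⟨i, hi⟩ := List.mem_iff_get.1 hclz
    have hdist : ‖u - c‖ < ε/4 := by rw [← dist_eq_norm]; exact Metric.mem_ball.1 huc
    have h1 := claim v hv i
    rw [hi] at h1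
    have h3 : ‖c + T v‖ - ‖u - c‖ ≤ ‖u + T v‖ := by
      have h4 := norm_sub_norm_le (c + T v) (u + T v)
      have he : (c + T v) - (u + T v) = c - u := by abel
      rw [he, norm_sub_rev] at h4
      linarith
    have hkey : 2 - ε ≤ ‖u + T v‖ := by linarith
    have hTv : ‖T v‖ ≤ 1 := by
      calc ‖T v‖ ≤ ‖T‖ * ‖v‖ := T.le_opNorm _
      _ = 1 := by rw [hT, hv, one_mul]
    have := stmt17_aux u (T v) ε ‖z‖ ‖y‖ hu.le hTv hkey (norm_nonneg z) (norm_nonneg y) hε1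
    have hzu : ‖z‖ • u = z := by
      rw [hudef, smul_smul, mul_inv_cancel₀ (norm_ne_zero_iff.2 hz0), one_smul]
    have hyTv : ‖y‖ • T v = T y := by rw [← map_smul, ← hyv]
    rwa [hzu, hyTv] at this
end

section
/- Let X be a Banach space with a nonzero L-orthogonal element u ∈ X**, i.e. ‖x + u‖ = ‖x‖ + ‖u‖ for all x ∈ X. Then the norm of X is octahedral. -/
open NormedSpace Metric Set

/-- Finite-dimensional Goldstine / Helly: given finitely many functionals and `w` in the bidual
with `‖w‖ ≤ 1`, there is `y` in the unit ball of `X` agreeing with `w` on the `f i` up to `δ`. -/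
lemma helly_goldstine {X : Type*} [NormedAddCommGroup X] [NormedSpace ℝ X]
    {ι : Type*} [Fintype ι] [DecidableEq ι] (f : ι → StrongDual ℝ X)
    (w : StrongDual ℝ (StrongDual ℝ X)) (hw : ‖w‖ ≤ 1) {δ : ℝ} (hδ : 0 < δ) :
    ∃ y : X, ‖y‖ ≤ 1 ∧ ∀ i, |f i y - w (f i)| ≤ δ := by
  set T : X →L[ℝ] (ι → ℝ) := ContinuousLinearMap.pi f with hT
  set S : Set (ι → ℝ) := T '' closedBall (0 : X) 1 with hS
  set c : ι → ℝ := fun i => w (f i) with hc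
  have hcmem : c ∈ closure S := by
    by_contra hcm
    have hconv : Convex ℝ (closure S) :=
      ((convex_closedBall (0 : X) 1).linear_image T.toLinearMap).closure
    obtain ⟨φ, r, h1, h2⟩ := geometric_hahn_banach_closed_point hconv isClosed_closure hcm
    set a : ι → ℝ := fun i => φ (fun j => if i = j then (1 : ℝ) else 0) with ha
    set g : StrongDual ℝ X := ∑ i, a i • f i with hg
    have hφ : ∀ v : ι → ℝ, φ v = ∑ i, v i * a i := by
      intro v
      conv_lhs => rw [pi_eq_sum_univ v]
      rw [map_sum]
      refine Finset.sum_congr rfl fun i _ => ?_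
      rw [map_smul, smul_eq_mul]
    have hgy : ∀ y : X, g y = φ (T y) := by
      intro y
      rw [hφ]
      simp only [hg, ContinuousLinearMap.sum_apply, ContinuousLinearMap.smul_apply,
        smul_eq_mul]
      refine Finset.sum_congr rfl fun i _ => ?_
      have : T y i = f i y := rfl
      rw [this, mul_comm]
    have hSlt : ∀ y : X, ‖y‖ ≤ 1 → g y < r := by
      intro y hy
      rw [hgy]
      exact h1 _ (subset_closure ⟨y, mem_closedBall_zero_iff.2 hy, rfl⟩)
    have hr0 : 0 < r := by
      have := hSlt 0 (by simp)
      simpa using this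
    have hgnorm : ‖g‖ ≤ r := by
      refine ContinuousLinearMap.opNorm_le_bound g hr0.le ?_
      intro y
      rcases eq_or_ne y 0 with rfl | hy0
      · simp [hr0.le]
      · have hyn : (0 : ℝ) < ‖y‖ := norm_pos_iff.2 hy0
        have h1' : g (‖y‖⁻¹ • y) < r := hSlt _ (by
          rw [norm_smul, norm_inv, norm_norm, inv_mul_cancel₀ hyn.ne'])
        have h2' : g (-(‖y‖⁻¹ • y)) < r := hSlt _ (by
          rw [norm_neg, norm_smul, norm_inv, norm_norm, inv_mul_cancel₀ hyn.ne'])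
        have habs : |g (‖y‖⁻¹ • y)| ≤ r := by
          rw [abs_le]
          constructor
          · have : -g (‖y‖⁻¹ • y) < r := by rwa [map_neg] at h2'
            linarith
          · linarith
        have : g (‖y‖⁻¹ • y) = ‖y‖⁻¹ * g y := by rw [map_smul, smul_eq_mul]
        rw [this, abs_mul, abs_inv, abs_norm] at habs
        rw [Real.norm_eq_abs]
        calc |g y| = ‖y‖ * (‖y‖⁻¹ * |g y|) := by
              field_simp
          _ ≤ ‖y‖ * r := by
              exact mul_le_mul_of_nonneg_left habs hyn.le
          _ = r * ‖y‖ := mul_comm _ _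
    have hwg : w g = φ c := by
      rw [hφ, hg, map_sum]
      refine Finset.sum_congr rfl fun i _ => ?_
      rw [map_smul, smul_eq_mul, mul_comm]
    have : w g ≤ r := by
      calc w g ≤ |w g| := le_abs_self _
        _ ≤ ‖w‖ * ‖g‖ := w.le_opNorm g
        _ ≤ 1 * r := mul_le_mul hw hgnorm (norm_nonneg _) zero_le_one
        _ = r := one_mul r
    rw [hwg] at this
    linarith
  rw [Metric.mem_closure_iff] at hcmem
  obtain ⟨b, hbS, hbd⟩ := hcmem δ hδ
  obtain ⟨y, hy, rfl⟩ := hbS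
  refine ⟨y, mem_closedBall_zero_iff.1 hy, fun i => ?_⟩
  have h1 : |f i y - w (f i)| = |(T y - c) i| := by
    simp [hc, hT]
  rw [h1]
  calc |(T y - c) i| = ‖(T y - c) i‖ := rfl
    _ ≤ ‖T y - c‖ := norm_le_pi_norm _ i
    _ = dist c (T y) := by rw [dist_comm, dist_eq_norm]
    _ ≤ δ := hbd.le

noncomputable instance instNormSMulClassBidual {X : Type*} [NormedAddCommGroup X]
    [NormedSpace ℝ X] : NormSMulClass ℝ (StrongDual ℝ (StrongDual ℝ X)) :=
  @NormedSpace.toNormSMulClass ℝ (StrongDual ℝ (StrongDual ℝ X)) _ _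
    ContinuousLinearMap.toNormedSpace

set_option maxHeartbeats 2000000 in
/-- If `X` admits a nonzero L-orthogonal element `u ∈ X**`, i.e.
`‖x + u‖ = ‖x‖ + ‖u‖` for all `x ∈ X`, then the norm of `X` is octahedral. -/
theorem stmt18 {X : Type*} [NormedAddCommGroup X] [NormedSpace ℝ X] [CompleteSpace X]
    (u : StrongDual ℝ (StrongDual ℝ X)) (hu : u ≠ 0)
    (hL : ∀ x : X, ‖inclusionInDoubleDual ℝ X x + u‖ = ‖x‖ + ‖u‖) :
    Octahedral X := by
  classical
  -- `X` is nontrivial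
  have hXnt : Nontrivial X := by
    by_contra h
    rw [not_nontrivial_iff_subsingleton] at h
    have h1 : Subsingleton (StrongDual ℝ X) := ⟨fun f g => by
      ext x; rw [Subsingleton.elim x 0]; simp⟩
    apply hu
    ext f
    rw [Subsingleton.elim f 0]
    simp
  have hun : (0 : ℝ) < ‖u‖ := by
    rcases (norm_nonneg u).lt_or_eq with h | h
    · exact h
    · exact absurd ((ContinuousLinearMap.opNorm_zero_iff u).mp h.symm) hu
  -- normalize `u`
  set v : StrongDual ℝ (StrongDual ℝ X) := ‖u‖⁻¹ • u with hvdef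
  clear_value v
  have hvn : ‖v‖ = 1 := by
    rw [hvdef, norm_smul, norm_inv, Real.norm_eq_abs, abs_of_pos hun, inv_mul_cancel₀ hun.ne']
  have hv : ∀ x : X, ‖inclusionInDoubleDual ℝ X x + v‖ = ‖x‖ + 1 := by
    intro x
    have h0 := hL (‖u‖ • x)
    have heq : inclusionInDoubleDual ℝ X x + v
        = ‖u‖⁻¹ • (inclusionInDoubleDual ℝ X (‖u‖ • x) + u) := by
      rw [smul_add, map_smul, smul_smul, inv_mul_cancel₀ hun.ne', one_smul, hvdef]
    rw [heq, norm_smul, norm_inv, Real.norm_eq_abs, abs_of_pos hun, h0, norm_smul, Real.norm_eq_abs, abs_of_pos hun]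
    field_simp
  intro E hE ε hε
  set δ : ℝ := min ε 1 / 4 with hδdef
  have hδ : 0 < δ := by
    rw [hδdef]; positivity
  have hδε : 2 * δ ≤ ε := by
    have : δ ≤ ε / 4 := by
      rw [hδdef]
      exact div_le_div_of_nonneg_right (min_le_left _ _) (by norm_num)
    linarith
  have hδ1 : 2 * δ < 1 := by
    have : δ ≤ 1 / 4 := by
      rw [hδdef]
      exact div_le_div_of_nonneg_right (min_le_right _ _) (by norm_num)
    linarith
  by_cases hEtriv : ∀ x ∈ E, x = (0 : X)
  · obtain ⟨z, hz0⟩ := exists_ne (0 : X)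
    refine ⟨‖z‖⁻¹ • z, ?_, ?_⟩
    · rw [norm_smul, norm_inv, norm_norm, inv_mul_cancel₀ (norm_pos_iff.2 hz0).ne']
    · intro x hx l
      rw [hEtriv x hx]
      have h1 : ‖(0 : X) + l • (‖z‖⁻¹ • z)‖ = |l| := by
        rw [zero_add, norm_smul, norm_smul, norm_inv, norm_norm,
          inv_mul_cancel₀ (norm_pos_iff.2 hz0).ne', Real.norm_eq_abs, mul_one]
      rw [h1, norm_zero, zero_add]
      nlinarith [abs_nonneg l]
  · push_neg at hEtriv
    obtain ⟨x₀, hx₀E, hx₀⟩ := hEtriv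
    -- the unit sphere of `E`, as a subset of `X`
    set K : Set X := ((↑) : E → X) '' (sphere (0 : E) 1) with hKdef
    have hKmem : ∀ x : X, x ∈ E → ‖x‖ = 1 → x ∈ K := by
      intro x hxE hxn
      exact ⟨⟨x, hxE⟩, by rwa [mem_sphere_zero_iff_norm], rfl⟩
    have hKnorm : ∀ p ∈ K, ‖p‖ = 1 ∧ p ∈ E := by
      rintro p ⟨e, he, rfl⟩
      rw [mem_sphere_zero_iff_norm] at he
      exact ⟨he, e.2⟩
    have hK : IsCompact K := (isCompact_sphere (0 : E) 1).image continuous_subtype_val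
    obtain ⟨t, hts, htfin, htcov⟩ := hK.elim_finite_subcover_image
      (fun c (_ : c ∈ K) => isOpen_ball (x := c) (ε := δ))
      (fun p hp => mem_biUnion hp (mem_ball_self hδ))
    -- norming functionals
    have hfc : ∀ c ∈ K, ∃ g : StrongDual ℝ X, ‖g‖ ≤ 1 ∧ 1 - δ ≤ g c ∧ 1 - δ ≤ v g := by
      intro c hc
      obtain ⟨hcn, _⟩ := hKnorm c hc
      set w : StrongDual ℝ (StrongDual ℝ X) := inclusionInDoubleDual ℝ X c + v with hwdef
      have hwn : ‖w‖ = 2 := by rw [hwdef, hv, hcn]; norm_num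
      have hlt : (2 - δ : ℝ) < ‖w‖ := by rw [hwn]; linarith
      obtain ⟨g₀, hg01, hg02⟩ := w.exists_lt_apply_of_lt_opNorm hlt
      obtain ⟨g, hgnorm, hwg⟩ : ∃ g : StrongDual ℝ X, ‖g‖ ≤ 1 ∧ 2 - δ < w g := by
        rcases le_or_gt 0 (w g₀) with hsign | hsign
        · exact ⟨g₀, hg01.le, by rwa [Real.norm_eq_abs, abs_of_nonneg hsign] at hg02⟩
        · refine ⟨-g₀, by rw [norm_neg]; exact hg01.le, ?_⟩
          rw [map_neg]
          rwa [Real.norm_eq_abs, abs_of_neg hsign] at hg02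
      have h3 : w g = g c + v g := by
        rw [hwdef]; simp [dual_def]
      have h4 : v g ≤ 1 := by
        calc v g ≤ |v g| := le_abs_self _
          _ ≤ ‖v‖ * ‖g‖ := v.le_opNorm g
          _ ≤ 1 * 1 := mul_le_mul hvn.le hgnorm (norm_nonneg _) zero_le_one
          _ = 1 := one_mul 1
      have h5 : g c ≤ 1 := by
        calc g c ≤ |g c| := le_abs_self _
          _ ≤ ‖g‖ * ‖c‖ := g.le_opNorm c
          _ ≤ 1 * 1 := mul_le_mul hgnorm hcn.le (norm_nonneg _) zero_le_one
          _ = 1 := one_mul 1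
      have h6 : 2 - δ < g c + v g := h3 ▸ hwg
      exact ⟨g, hgnorm, by linarith, by linarith⟩
    choose F hF1 hF2 hF3 using hfc
    haveI : Fintype ↥t := htfin.fintype
    set f : ↥t → StrongDual ℝ X := fun c => F c (hts c.2) with hfdef
    obtain ⟨y, hy1, hy2⟩ := helly_goldstine f v (le_of_eq hvn) hδ
    have hfy : ∀ c : ↥t, 1 - 2 * δ ≤ f c y := by
      intro c
      have h1 := hy2 c
      have h2 := hF3 (c : X) (hts c.2)
      rw [abs_le] at h1
      have : v (f c) - δ ≤ f c y := by linarith [h1.1]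
      calc (1 : ℝ) - 2 * δ = (1 - δ) - δ := by ring
        _ ≤ v (f c) - δ := by linarith [h2]
        _ ≤ f c y := this
    -- `t` is nonempty
    have hx₀n : (0 : ℝ) < ‖x₀‖ := norm_pos_iff.2 hx₀
    have hxhatK : ‖x₀‖⁻¹ • x₀ ∈ K := hKmem _ (E.smul_mem _ hx₀E)
      (by rw [norm_smul, norm_inv, norm_norm, inv_mul_cancel₀ hx₀n.ne'])
    obtain ⟨c₀, hc₀t, _⟩ := mem_iUnion₂.1 (htcov hxhatK)
    have hyn : 1 - 2 * δ ≤ ‖y‖ := by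
      have h1 := hfy ⟨c₀, hc₀t⟩
      calc (1 : ℝ) - 2 * δ ≤ f ⟨c₀, hc₀t⟩ y := h1
        _ ≤ |f ⟨c₀, hc₀t⟩ y| := le_abs_self _
        _ ≤ ‖f ⟨c₀, hc₀t⟩‖ * ‖y‖ := (f ⟨c₀, hc₀t⟩).le_opNorm y
        _ ≤ 1 * ‖y‖ := mul_le_mul_of_nonneg_right (hF1 _ _) (norm_nonneg _)
        _ = ‖y‖ := one_mul _
    have hy0 : (0 : ℝ) < ‖y‖ := by linarith
    set y' : X := ‖y‖⁻¹ • y with hy'def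
    clear_value y'
    have hy'n : ‖y'‖ = 1 := by
      rw [hy'def, norm_smul, norm_inv, norm_norm, inv_mul_cancel₀ hy0.ne']
    -- the functionals are large on `y'`
    have hfy' : ∀ c : ↥t, 1 - 2 * δ ≤ f c y' := by
      intro c
      have h1 := hfy c
      have h2 : f c y' = ‖y‖⁻¹ * f c y := by
        rw [hy'def, map_smul, smul_eq_mul]
      have h3 : (1 : ℝ) ≤ ‖y‖⁻¹ := by
        rw [le_inv_comm₀ one_pos hy0]
        simpa using hy1
      have h4 : (0 : ℝ) ≤ f c y := by linarith
      rw [h2]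
      calc (1 : ℝ) - 2 * δ ≤ f c y := h1
        _ = 1 * f c y := (one_mul _).symm
        _ ≤ ‖y‖⁻¹ * f c y := mul_le_mul_of_nonneg_right h3 h4
    -- main claim for nonnegative scalars
    have key : ∀ x ∈ E, ∀ l : ℝ, 0 ≤ l → (1 - ε) * (‖x‖ + l) ≤ ‖x + l • y'‖ := by
      intro x hxE l hl
      rcases eq_or_ne x 0 with rfl | hx0
      · rw [zero_add, norm_zero, zero_add, norm_smul, hy'n, mul_one, Real.norm_eq_abs,
          abs_of_nonneg hl]
        nlinarith
      · have hs : (0 : ℝ) < ‖x‖ := norm_pos_iff.2 hx0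
        set xh : X := ‖x‖⁻¹ • x with hxhdef
        clear_value xh
        have hxhK : xh ∈ K := by
          rw [hxhdef]
          exact hKmem _ (E.smul_mem _ hxE)
            (by rw [norm_smul, norm_inv, norm_norm, inv_mul_cancel₀ hs.ne'])
        obtain ⟨c, hct, hcball⟩ := mem_iUnion₂.1 (htcov hxhK)
        have hcd : ‖xh - c‖ < δ := by
          rw [mem_ball, dist_eq_norm] at hcball
          exact hcball
        set g : StrongDual ℝ X := f ⟨c, hct⟩ with hgdef
        have hg1 : ‖g‖ ≤ 1 := hF1 _ _
        have hgc : 1 - δ ≤ g c := hF2 _ _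
        have hgy' : 1 - 2 * δ ≤ g y' := hfy' ⟨c, hct⟩
        have hgxh : 1 - 2 * δ ≤ g xh := by
          have h1 : g xh - g c = g (xh - c) := by rw [map_sub]
          have h2 : |g (xh - c)| ≤ ‖g‖ * ‖xh - c‖ := g.le_opNorm _
          have h3 : ‖g‖ * ‖xh - c‖ ≤ 1 * δ :=
            mul_le_mul hg1 hcd.le (norm_nonneg _) zero_le_one
          have h4 : -δ ≤ g (xh - c) := by
            have := (abs_le.1 (h2.trans (by linarith : ‖g‖ * ‖xh - c‖ ≤ δ))).1
            linarith
          linarith [h1 ▸ h4]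
        have hlam : (0 : ℝ) ≤ l / ‖x‖ := div_nonneg hl hs.le
        have hkey : (1 - ε) * (1 + l / ‖x‖) ≤ ‖xh + (l / ‖x‖) • y'‖ := by
          have h1 : g (xh + (l / ‖x‖) • y') = g xh + (l / ‖x‖) * g y' := by
            rw [map_add, map_smul, smul_eq_mul]

          have h2 : g (xh + (l / ‖x‖) • y') ≤ ‖xh + (l / ‖x‖) • y'‖ := by
            calc g (xh + (l / ‖x‖) • y') ≤ |g (xh + (l / ‖x‖) • y')| := le_abs_self _
              _ ≤ ‖g‖ * ‖xh + (l / ‖x‖) • y'‖ := g.le_opNorm _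
              _ ≤ 1 * ‖xh + (l / ‖x‖) • y'‖ :=
                  mul_le_mul_of_nonneg_right hg1 (norm_nonneg _)
              _ = ‖xh + (l / ‖x‖) • y'‖ := one_mul _
          have h3 : (1 - ε) * (1 + l / ‖x‖) ≤ (1 - 2 * δ) * (1 + l / ‖x‖) := by
            have : (1 : ℝ) - ε ≤ 1 - 2 * δ := by linarith
            nlinarith
          have h4 : (1 - 2 * δ) * (1 + l / ‖x‖) ≤ g xh + (l / ‖x‖) * g y' := by
            nlinarith
          linarith [h1 ▸ h4]
        have hscale : x + l • y' = ‖x‖ • (xh + (l / ‖x‖) • y') := by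
          rw [hxhdef, smul_add, smul_smul, smul_smul, mul_inv_cancel₀ hs.ne', one_smul,
            mul_div_cancel₀ _ hs.ne']
        calc (1 - ε) * (‖x‖ + l) = ‖x‖ * ((1 - ε) * (1 + l / ‖x‖)) := by
              field_simp
          _ ≤ ‖x‖ * ‖xh + (l / ‖x‖) • y'‖ := mul_le_mul_of_nonneg_left hkey hs.le
          _ = ‖x + l • y'‖ := by
              rw [hscale, norm_smul, norm_norm]
    refine ⟨y', hy'n, ?_⟩
    intro x hx l
    rcases le_or_gt 0 l with hl | hl
    · rw [abs_of_nonneg hl]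
      exact key x hx l hl
    · have h1 : ‖x + l • y'‖ = ‖(-x) + (-l) • y'‖ := by
        rw [← norm_neg (x + l • y'), neg_add, neg_smul]
      rw [h1, abs_of_neg hl]
      have h2 := key (-x) (E.neg_mem hx) (-l) (by linarith)
      rwa [norm_neg] at h2
end
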